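/- Let k be an odd positive integer and τ, σ ∈ H. Then Z_k(τ,σ) = D_k(q) + D_k(r) + 2 ∑_{(a,b)} D_k(q^a r^b), where q = e^{2πiτ}, r = e^{2πiσ}, and the (absolutely convergent) sum is over all pairs (a,b) of relatively prime positive integers. -/

import Mathlib

open Complex Filter Topology

/-- The open upper half-plane as a subset of `ℂ`. -/
def UHP : Set ℂ := {z : ℂ | 0 < z.im}

/-- `qexp τ = e^{2πiτ}`. -/
noncomputable def qexp (τ : ℂ) : ℂ := Complex.exp (2 * Real.pi * Complex.I * τ)

/-- Elliptic zeta values `Z_k(τ,σ)`. -/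
noncomputable def ellipticZeta (k : ℕ) (τ σ : ℂ) : ℂ :=
  -((2 * (Real.pi : ℂ) * Complex.I) ^ k / (Nat.factorial (k - 1) : ℂ)) *
    ∑' j : ℕ+, (j : ℂ) ^ (k - 1) *
      (qexp τ ^ (j : ℕ) - (-1 : ℂ) ^ k * qexp σ ^ (j : ℕ)) /
      ((1 - qexp τ ^ (j : ℕ)) * (1 - qexp σ ^ (j : ℕ)))

/-- `D_k(q)`: the normalized generating function of sums of `(k-1)`-st powers of divisors. -/
noncomputable def Dk (k : ℕ) (q : ℂ) : ℂ :=
  ((-2 * (Real.pi : ℂ) * Complex.I) ^ k / (Nat.factorial (k - 1) : ℂ)) *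
    ∑' n : ℕ+, (∑ d ∈ Nat.divisors (n : ℕ), (d : ℂ) ^ (k - 1)) * q ^ (n : ℕ)

/-- Ruijsenaars's elliptic gamma function. -/
noncomputable def ellipticGamma (z τ σ : ℂ) : ℂ :=
  ∏' p : ℕ × ℕ,
    (1 - qexp τ ^ (p.1 + 1) * qexp σ ^ (p.2 + 1) * Complex.exp (-(2 * Real.pi * Complex.I) * z)) /
    (1 - qexp τ ^ p.1 * qexp σ ^ p.2 * Complex.exp (2 * Real.pi * Complex.I * z))

/-- The modified theta function `θ₀(z,τ)`. -/
noncomputable def theta0 (z τ : ℂ) : ℂ :=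
  ∏' j : ℕ, (1 - qexp τ ^ (j + 1) * Complex.exp (-(2 * Real.pi * Complex.I) * z)) *
            (1 - qexp τ ^ j * Complex.exp (2 * Real.pi * Complex.I * z))

/-- A modular form of weight `k` for `SL(2,ℤ)`: a holomorphic function on the
upper half-plane transforming with weight `k` under `SL(2,ℤ)` and bounded as `Im τ → ∞`. -/
def IsModularForm (k : ℕ) (G : ℂ → ℂ) : Prop :=
  DifferentiableOn ℂ G UHP ∧
  (∀ A : Matrix.SpecialLinearGroup (Fin 2) ℤ, ∀ τ ∈ UHP,
      G (((A 0 0 : ℤ) * τ + (A 0 1 : ℤ)) / ((A 1 0 : ℤ) * τ + (A 1 1 : ℤ))) =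
        ((A 1 0 : ℤ) * τ + (A 1 1 : ℤ)) ^ k * G τ) ∧
  (∃ C : ℝ, ∀ τ ∈ UHP, 1 ≤ τ.im → ‖G τ‖ ≤ C)

/-- All factors in the defining double product of the elliptic gamma function are nonzero. -/
def EGFactorsNeZero (z τ σ : ℂ) : Prop :=
  ∀ j ℓ : ℕ,
    (1 - qexp τ ^ (j + 1) * qexp σ ^ (ℓ + 1) * Complex.exp (-(2 * Real.pi * Complex.I) * z)) ≠ 0 ∧
    (1 - qexp τ ^ j * qexp σ ^ ℓ * Complex.exp (2 * Real.pi * Complex.I * z)) ≠ 0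

namespace EZ5

def eN : ℕ ≃ ℕ+ where
  toFun n := ⟨n + 1, n.succ_pos⟩
  invFun m := (m : ℕ) - 1
  left_inv n := rfl
  right_inv m := PNat.coe_injective (Nat.succ_pred_eq_of_pos m.2)

lemma summable_pnat {E : Type*} [NormedAddCommGroup E] [CompleteSpace E] {g : ℕ → E}
    (hg : Summable g) : Summable fun m : ℕ+ => g (m : ℕ) :=
  hg.comp_injective PNat.coe_injective

lemma norm_qexp_lt_one {τ : ℂ} (hτ : τ ∈ UHP) : ‖qexp τ‖ < 1 := by
  have hre : (2 * (Real.pi : ℂ) * Complex.I * τ).re = -(2 * Real.pi * τ.im) := by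
    simp [Complex.mul_re, Complex.mul_im]
  rw [qexp, Complex.norm_exp, hre]
  have hpi := Real.pi_pos
  have him : 0 < τ.im := hτ
  rw [Real.exp_lt_one_iff]
  nlinarith

lemma one_sub_ne {z : ℂ} (h : ‖z‖ < 1) : 1 - z ≠ 0 := by
  intro h0
  rw [sub_eq_zero] at h0
  rw [← h0] at h
  simp at h

lemma summable_geom_pnat {z : ℂ} (hz : ‖z‖ < 1) : Summable fun m : ℕ+ => z ^ (m : ℕ) :=
  summable_pnat (summable_geometric_of_norm_lt_one hz)

lemma tsum_geom_pnat {z : ℂ} (hz : ‖z‖ < 1) : ∑' m : ℕ+, z ^ (m : ℕ) = z * (1 - z)⁻¹ := by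
  rw [← Equiv.tsum_eq eN fun m : ℕ+ => z ^ (m : ℕ)]
  have h : ∀ n : ℕ, z ^ ((eN n : ℕ)) = z * z ^ n := fun n => by
    show z ^ (n + 1) = z * z ^ n; ring
  rw [tsum_congr h, tsum_mul_left, tsum_geometric_of_norm_lt_one hz]

lemma nat_ineq {j m : ℕ} (hj : 0 < j) (hm : 0 < m) : j + (m - 1) ≤ j * m := by
  obtain ⟨m', rfl⟩ : ∃ m', m = m' + 1 := ⟨m - 1, by omega⟩
  have : m' ≤ j * m' := Nat.le_mul_of_pos_left m' hj
  have h2 : j * (m' + 1) = j * m' + j := by ring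
  omega

lemma pow_bound {t : ℝ} (ht0 : 0 ≤ t) (ht : t < 1) {j m : ℕ} (hj : 0 < j) (hm : 0 < m) :
    t ^ (j * m) ≤ t ^ j * t ^ (m - 1) := by
  rw [← pow_add]
  exact pow_le_pow_of_le_one ht0 ht.le (nat_ineq hj hm)

end EZ5
namespace EZ5

lemma summable_pred_pnat {E : Type*} [NormedAddCommGroup E] [CompleteSpace E] {g : ℕ → E}
    (hg : Summable g) : Summable fun m : ℕ+ => g ((m : ℕ) - 1) :=
  (hg.comp_injective eN.symm.injective).congr (fun _ => rfl)

lemma summable2 (K : ℕ) {t : ℝ} (ht0 : 0 ≤ t) (ht : t < 1) :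
    Summable fun p : ℕ+ × ℕ+ => ((p.1 : ℕ) : ℝ) ^ K * t ^ ((p.1 : ℕ) * (p.2 : ℕ)) := by
  have hdom : Summable fun p : ℕ+ × ℕ+ =>
      (((p.1 : ℕ) : ℝ) ^ K * t ^ (p.1 : ℕ)) * t ^ ((p.2 : ℕ) - 1) := by
    apply Summable.mul_of_nonneg (f := fun j : ℕ+ => ((j : ℕ) : ℝ) ^ K * t ^ (j : ℕ))
      (g := fun m : ℕ+ => t ^ ((m : ℕ) - 1))
    · exact (summable_pow_mul_geometric_of_norm_lt_one (R := ℝ) K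
        (by rwa [Real.norm_eq_abs, _root_.abs_of_nonneg ht0])).comp_injective PNat.coe_injective
    · exact summable_pred_pnat (summable_geometric_of_lt_one ht0 ht)
    · intro j; show (0:ℝ) ≤ _; positivity
    · intro m; show (0:ℝ) ≤ _; positivity
  apply Summable.of_nonneg_of_le (fun p => by positivity) (fun p => ?_) hdom
  calc ((p.1 : ℕ) : ℝ) ^ K * t ^ ((p.1 : ℕ) * (p.2 : ℕ))
      ≤ ((p.1 : ℕ) : ℝ) ^ K * (t ^ (p.1 : ℕ) * t ^ ((p.2 : ℕ) - 1)) := by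
        apply mul_le_mul_of_nonneg_left (pow_bound ht0 ht p.1.2 p.2.2) (by positivity)
    _ = (((p.1 : ℕ) : ℝ) ^ K * t ^ (p.1 : ℕ)) * t ^ ((p.2 : ℕ) - 1) := by ring

lemma summable3 (K : ℕ) {t s : ℝ} (ht0 : 0 ≤ t) (ht : t < 1) (hs0 : 0 ≤ s) (hs : s < 1) :
    Summable fun p : (ℕ+ × ℕ+) × ℕ+ =>
      ((p.2 : ℕ) : ℝ) ^ K * (t ^ ((p.2 : ℕ) * (p.1.1 : ℕ)) * s ^ ((p.2 : ℕ) * (p.1.2 : ℕ))) := by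
  have hts0 : 0 ≤ t * s := by positivity
  have hts : t * s < 1 := by nlinarith
  have hdom : Summable fun p : (ℕ+ × ℕ+) × ℕ+ =>
      (t ^ ((p.1.1 : ℕ) - 1) * s ^ ((p.1.2 : ℕ) - 1)) *
        (((p.2 : ℕ) : ℝ) ^ K * (t * s) ^ (p.2 : ℕ)) := by
    apply Summable.mul_of_nonneg
      (f := fun mn : ℕ+ × ℕ+ => t ^ ((mn.1 : ℕ) - 1) * s ^ ((mn.2 : ℕ) - 1))
      (g := fun j : ℕ+ => ((j : ℕ) : ℝ) ^ K * (t * s) ^ (j : ℕ))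
    · apply Summable.mul_of_nonneg (f := fun m : ℕ+ => t ^ ((m : ℕ) - 1))
        (g := fun n : ℕ+ => s ^ ((n : ℕ) - 1))
      · exact summable_pred_pnat (summable_geometric_of_lt_one ht0 ht)
      · exact summable_pred_pnat (summable_geometric_of_lt_one hs0 hs)
      · intro m; positivity
      · intro n; positivity
    · exact (summable_pow_mul_geometric_of_norm_lt_one (R := ℝ) K
        (by rwa [Real.norm_eq_abs, _root_.abs_of_nonneg hts0])).comp_injective PNat.coe_injective
    · intro mn; positivity
    · intro j; show (0:ℝ) ≤ _; positivity
  apply Summable.of_nonneg_of_le (fun p => by positivity) (fun p => ?_) hdom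
  obtain ⟨⟨m, n⟩, j⟩ := p
  calc ((j : ℕ) : ℝ) ^ K * (t ^ ((j : ℕ) * (m : ℕ)) * s ^ ((j : ℕ) * (n : ℕ)))
      ≤ ((j : ℕ) : ℝ) ^ K *
          ((t ^ (j : ℕ) * t ^ ((m : ℕ) - 1)) * (s ^ (j : ℕ) * s ^ ((n : ℕ) - 1))) := by
        apply mul_le_mul_of_nonneg_left _ (by positivity)
        apply mul_le_mul (pow_bound ht0 ht j.2 m.2) (pow_bound hs0 hs j.2 n.2)
          (by positivity) (by positivity)
    _ = (t ^ ((m : ℕ) - 1) * s ^ ((n : ℕ) - 1)) *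
          (((j : ℕ) : ℝ) ^ K * (t * s) ^ (j : ℕ)) := by rw [mul_pow]; ring

lemma summable2C (K : ℕ) {w : ℂ} (hw : ‖w‖ < 1) :
    Summable fun p : ℕ+ × ℕ+ => ((p.1 : ℕ) : ℂ) ^ K * w ^ ((p.1 : ℕ) * (p.2 : ℕ)) := by
  apply Summable.of_norm
  exact (summable2 K (norm_nonneg w) hw).congr
    (fun p => by simp [norm_mul, norm_pow])

end EZ5
namespace EZ5

def mulFn : ℕ+ × ℕ+ → ℕ+ := fun p => p.1 * p.2

def Efib (n : ℕ+) : (mulFn ⁻¹' {n}) ≃ {d : ℕ × ℕ // d ∈ Nat.divisorsAntidiagonal (n : ℕ)} where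
  toFun p := ⟨((p.1.1 : ℕ), (p.1.2 : ℕ)), by
    rw [Nat.mem_divisorsAntidiagonal]
    have h : p.1.1 * p.1.2 = n := p.2
    constructor
    · rw [← PNat.mul_coe, h]
    · exact n.pos.ne'⟩
  invFun d := ⟨(⟨d.1.1, Nat.pos_of_ne_zero (by
      have h := Nat.mem_divisorsAntidiagonal.mp d.2
      intro h0; rw [h0, zero_mul] at h; exact h.2 h.1.symm)⟩,
    ⟨d.1.2, Nat.pos_of_ne_zero (by
      have h := Nat.mem_divisorsAntidiagonal.mp d.2
      intro h0; rw [h0, mul_zero] at h; exact h.2 h.1.symm)⟩), by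
    have h := Nat.mem_divisorsAntidiagonal.mp d.2
    exact PNat.coe_injective h.1⟩
  left_inv p := Subtype.ext rfl
  right_inv d := Subtype.ext rfl

set_option maxHeartbeats 1000000 in
lemma tsum_divisor_group (K : ℕ) {w : ℂ} (hw : ‖w‖ < 1) :
    ∑' n : ℕ+, (∑ d ∈ Nat.divisors (n : ℕ), ((d : ℕ) : ℂ) ^ K) * w ^ (n : ℕ) =
      ∑' p : ℕ+ × ℕ+, ((p.1 : ℕ) : ℂ) ^ K * w ^ ((p.1 : ℕ) * (p.2 : ℕ)) := by
  have hs := summable2C K hw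
  rw [← (hs.hasSum.tsum_fiberwise mulFn).tsum_eq]
  apply tsum_congr
  intro n
  rw [← Equiv.tsum_eq (Efib n).symm]
  have h1 : ∀ d : {d : ℕ × ℕ // d ∈ Nat.divisorsAntidiagonal (n : ℕ)},
      (((((Efib n).symm d : mulFn ⁻¹' {n}) : ℕ+ × ℕ+).1 : ℕ) : ℂ) ^ K *
        w ^ (((((Efib n).symm d : mulFn ⁻¹' {n}) : ℕ+ × ℕ+).1 : ℕ) *
          ((((Efib n).symm d : mulFn ⁻¹' {n}) : ℕ+ × ℕ+).2 : ℕ)) =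
      ((d.1.1 : ℕ) : ℂ) ^ K * w ^ (n : ℕ) := by
    intro d
    have h := Nat.mem_divisorsAntidiagonal.mp d.2
    have hd : ((((Efib n).symm d : mulFn ⁻¹' {n}) : ℕ+ × ℕ+).1 : ℕ) = d.1.1 := rfl
    have hd2 : ((((Efib n).symm d : mulFn ⁻¹' {n}) : ℕ+ × ℕ+).2 : ℕ) = d.1.2 := rfl
    rw [hd, hd2, h.1]
  rw [tsum_congr h1]
  have h2 : ∑' b : {d : ℕ × ℕ // d ∈ Nat.divisorsAntidiagonal (n : ℕ)},
      ((b.1.1 : ℕ) : ℂ) ^ K * w ^ (n : ℕ) =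
      ∑ d ∈ Nat.divisorsAntidiagonal (n : ℕ), ((d.1 : ℕ) : ℂ) ^ K * w ^ (n : ℕ) :=
    Finset.tsum_subtype _ (fun d : ℕ × ℕ => ((d.1 : ℕ) : ℂ) ^ K * w ^ (n : ℕ))
  rw [h2, Nat.sum_divisorsAntidiagonal (fun a b => ((a : ℕ) : ℂ) ^ K * w ^ (n : ℕ)),
    ← Finset.sum_mul]

end EZ5
namespace EZ5

lemma norm_pow_lt_one {x : ℂ} (hx : ‖x‖ < 1) (j : ℕ+) : ‖x ^ (j : ℕ)‖ < 1 := by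
  rw [norm_pow]
  exact pow_lt_one₀ (norm_nonneg x) hx j.pos.ne'

lemma inner_geom (K : ℕ) {x : ℂ} (hx : ‖x‖ < 1) (j : ℕ+) :
    ∑' m : ℕ+, ((j : ℕ) : ℂ) ^ K * x ^ ((j : ℕ) * (m : ℕ)) =
      ((j : ℕ) : ℂ) ^ K * (x ^ (j : ℕ) * (1 - x ^ (j : ℕ))⁻¹) := by
  have h : ∀ m : ℕ+, ((j : ℕ) : ℂ) ^ K * x ^ ((j : ℕ) * (m : ℕ)) =
      ((j : ℕ) : ℂ) ^ K * (x ^ (j : ℕ)) ^ (m : ℕ) := fun m => by rw [pow_mul]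
  rw [tsum_congr h, tsum_mul_left, tsum_geom_pnat (norm_pow_lt_one hx j)]

lemma tsum2_eq_lambert (K : ℕ) {x : ℂ} (hx : ‖x‖ < 1) :
    ∑' p : ℕ+ × ℕ+, ((p.1 : ℕ) : ℂ) ^ K * x ^ ((p.1 : ℕ) * (p.2 : ℕ)) =
      ∑' j : ℕ+, ((j : ℕ) : ℂ) ^ K * (x ^ (j : ℕ) * (1 - x ^ (j : ℕ))⁻¹) := by
  rw [Summable.tsum_prod (summable2C K hx)]
  exact tsum_congr fun j => inner_geom K hx j

abbrev Cop := {p : ℕ × ℕ // 0 < p.1 ∧ 0 < p.2 ∧ Nat.Coprime p.1 p.2}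

def gcdFn (q : ℕ+ × ℕ+) : Cop :=
  ⟨((q.1 : ℕ) / Nat.gcd (q.1 : ℕ) (q.2 : ℕ), (q.2 : ℕ) / Nat.gcd (q.1 : ℕ) (q.2 : ℕ)), by
    have hd : 0 < Nat.gcd (q.1 : ℕ) (q.2 : ℕ) := Nat.gcd_pos_of_pos_left _ q.1.2
    refine ⟨Nat.div_pos (Nat.le_of_dvd q.1.2 (Nat.gcd_dvd_left _ _)) hd,
      Nat.div_pos (Nat.le_of_dvd q.2.2 (Nat.gcd_dvd_right _ _)) hd,
      Nat.coprime_div_gcd_div_gcd hd⟩⟩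

def EfibC (p : Cop) : (gcdFn ⁻¹' {p}) ≃ ℕ+ where
  toFun q := ⟨Nat.gcd (q.1.1 : ℕ) (q.1.2 : ℕ), Nat.gcd_pos_of_pos_left _ q.1.1.2⟩
  invFun c := ⟨(⟨p.1.1 * (c : ℕ), Nat.mul_pos p.2.1 c.2⟩,
                ⟨p.1.2 * (c : ℕ), Nat.mul_pos p.2.2.1 c.2⟩), by
    have hg : Nat.gcd (p.1.1 * (c : ℕ)) (p.1.2 * (c : ℕ)) = (c : ℕ) := by
      rw [Nat.gcd_mul_right, p.2.2.2, one_mul]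
    have h1 : (p.1.1 * (c : ℕ)) / Nat.gcd (p.1.1 * (c : ℕ)) (p.1.2 * (c : ℕ)) = p.1.1 := by
      rw [hg]; exact Nat.mul_div_cancel _ c.2
    have h2 : (p.1.2 * (c : ℕ)) / Nat.gcd (p.1.1 * (c : ℕ)) (p.1.2 * (c : ℕ)) = p.1.2 := by
      rw [hg]; exact Nat.mul_div_cancel _ c.2
    show gcdFn _ = p
    exact Subtype.ext (Prod.ext h1 h2)⟩
  left_inv q := by
    apply Subtype.ext
    have hq : gcdFn q.1 = p := q.2
    have ha : ((p : ℕ × ℕ).1 : ℕ) = (q.1.1 : ℕ) / Nat.gcd (q.1.1 : ℕ) (q.1.2 : ℕ) :=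
      (congrArg (fun z : Cop => (z : ℕ × ℕ).1) hq).symm
    have hb : ((p : ℕ × ℕ).2 : ℕ) = (q.1.2 : ℕ) / Nat.gcd (q.1.1 : ℕ) (q.1.2 : ℕ) :=
      (congrArg (fun z : Cop => (z : ℕ × ℕ).2) hq).symm
    apply Prod.ext
    · apply PNat.coe_injective
      show (p : ℕ × ℕ).1 * Nat.gcd (q.1.1 : ℕ) (q.1.2 : ℕ) = (q.1.1 : ℕ)
      rw [ha, Nat.div_mul_cancel (Nat.gcd_dvd_left _ _)]
    · apply PNat.coe_injective
      show (p : ℕ × ℕ).2 * Nat.gcd (q.1.1 : ℕ) (q.1.2 : ℕ) = (q.1.2 : ℕ)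
      rw [hb, Nat.div_mul_cancel (Nat.gcd_dvd_right _ _)]
  right_inv c := by
    apply PNat.coe_injective
    show Nat.gcd (p.1.1 * (c : ℕ)) (p.1.2 * (c : ℕ)) = (c : ℕ)
    rw [Nat.gcd_mul_right, p.2.2.2, one_mul]

end EZ5

/-- for odd positive `k`,
`Z_k(τ,σ) = D_k(q) + D_k(r) + 2 ∑_{(a,b)=1} D_k(q^a r^b)`,
the sum running over pairs of coprime positive integers, converging absolutely. -/
theorem ellipticZeta_eq_sum_Dk_of_odd
    (k : ℕ) (hk : Odd k) (τ σ : ℂ) (hτ : τ ∈ UHP) (hσ : σ ∈ UHP) :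
    Summable (fun p : {p : ℕ × ℕ // 0 < p.1 ∧ 0 < p.2 ∧ Nat.Coprime p.1 p.2} =>
      ‖Dk k (qexp τ ^ (p : ℕ × ℕ).1 * qexp σ ^ (p : ℕ × ℕ).2)‖) ∧
    ellipticZeta k τ σ = Dk k (qexp τ) + Dk k (qexp σ) +
      2 * ∑' p : {p : ℕ × ℕ // 0 < p.1 ∧ 0 < p.2 ∧ Nat.Coprime p.1 p.2},
        Dk k (qexp τ ^ (p : ℕ × ℕ).1 * qexp σ ^ (p : ℕ × ℕ).2) := by
  have hx : ‖qexp τ‖ < 1 := EZ5.norm_qexp_lt_one hτ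
  have hy : ‖qexp σ‖ < 1 := EZ5.norm_qexp_lt_one hσ
  have hx0 : (0:ℝ) ≤ ‖qexp τ‖ := norm_nonneg _
  have hy0 : (0:ℝ) ≤ ‖qexp σ‖ := norm_nonneg _
  -- the coefficient
  have hDkeq : ∀ w : ℂ, ‖w‖ < 1 → Dk k w =
      -((2 * (Real.pi : ℂ) * Complex.I) ^ k / (Nat.factorial (k - 1) : ℂ)) *
        ∑' p : ℕ+ × ℕ+, ((p.1 : ℕ) : ℂ) ^ (k - 1) * w ^ ((p.1 : ℕ) * (p.2 : ℕ)) := by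
    intro w hw
    rw [Dk, EZ5.tsum_divisor_group (k - 1) hw]
    rw [show ((-2 : ℂ) * (Real.pi : ℂ) * Complex.I) ^ k =
        -((2 * (Real.pi : ℂ) * Complex.I) ^ k) from by
      rw [show ((-2 : ℂ)) * (Real.pi : ℂ) * Complex.I =
        -(2 * (Real.pi : ℂ) * Complex.I) from by ring, hk.neg_pow]]
    rw [neg_div]
  -- norm bound for the coprime powers
  have hwp : ∀ p : EZ5.Cop, ‖qexp τ ^ (p : ℕ × ℕ).1 * qexp σ ^ (p : ℕ × ℕ).2‖ < 1 := by
    intro p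
    have h1 : ‖qexp τ‖ ^ (p : ℕ × ℕ).1 ≤ ‖qexp τ‖ := by
      calc ‖qexp τ‖ ^ (p : ℕ × ℕ).1 ≤ ‖qexp τ‖ ^ 1 :=
            pow_le_pow_of_le_one hx0 hx.le p.2.1
        _ = ‖qexp τ‖ := pow_one _
    have h2 : ‖qexp σ‖ ^ (p : ℕ × ℕ).2 ≤ 1 := pow_le_one₀ hy0 hy.le
    have h3 : (0:ℝ) ≤ ‖qexp σ‖ ^ (p : ℕ × ℕ).2 := by positivity
    rw [norm_mul, norm_pow, norm_pow]
    nlinarith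
  -- the master triple-indexed function
  set F : (ℕ+ × ℕ+) × ℕ+ → ℂ := fun q => ((q.2 : ℕ) : ℂ) ^ (k - 1) *
      (qexp τ ^ ((q.2 : ℕ) * (q.1.1 : ℕ)) * qexp σ ^ ((q.2 : ℕ) * (q.1.2 : ℕ))) with hF
  have hFnorm : ∀ q, ‖F q‖ = ((q.2 : ℕ) : ℝ) ^ (k - 1) *
      (‖qexp τ‖ ^ ((q.2 : ℕ) * (q.1.1 : ℕ)) * ‖qexp σ‖ ^ ((q.2 : ℕ) * (q.1.2 : ℕ))) :=
    fun q => by simp [hF, norm_mul, norm_pow]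
  have SFn : Summable fun q => ‖F q‖ :=
    (EZ5.summable3 (k - 1) hx0 hx hy0 hy).congr fun q => (hFnorm q).symm
  have SF : Summable F := SFn.of_norm
  -- pointwise value of F along a coprime fiber
  have hptF : ∀ (p : EZ5.Cop) (c : ℕ+) (j : ℕ+),
      F ((((EZ5.EfibC p).symm c : EZ5.gcdFn ⁻¹' {p}) : ℕ+ × ℕ+), j) =
        ((j : ℕ) : ℂ) ^ (k - 1) *
          (qexp τ ^ (p : ℕ × ℕ).1 * qexp σ ^ (p : ℕ × ℕ).2) ^ ((j : ℕ) * (c : ℕ)) := by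
    intro p c j
    have e1 : ((((EZ5.EfibC p).symm c : EZ5.gcdFn ⁻¹' {p}) : ℕ+ × ℕ+).1 : ℕ) =
        (p : ℕ × ℕ).1 * (c : ℕ) := rfl
    have e2 : ((((EZ5.EfibC p).symm c : EZ5.gcdFn ⁻¹' {p}) : ℕ+ × ℕ+).2 : ℕ) =
        (p : ℕ × ℕ).2 * (c : ℕ) := rfl
    rw [hF]
    simp only [e1, e2]
    rw [mul_pow, ← pow_mul, ← pow_mul]
    congr 2 <;> ring
  -- geometric norm summability helpers
  have hgeo : ∀ (z : ℂ), ‖z‖ < 1 → ∀ j : ℕ+,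
      Summable fun m : ℕ+ => ‖(z ^ (j : ℕ)) ^ (m : ℕ)‖ := by
    intro z hz j
    apply Summable.congr ((summable_geometric_of_lt_one (norm_nonneg _)
      (EZ5.norm_pow_lt_one hz j)).comp_injective PNat.coe_injective)
    intro m
    simp [Function.comp, norm_pow]
  -- grouping by j : the inner sum over (m, n)
  have SF' : Summable fun r : ℕ+ × (ℕ+ × ℕ+) => F (r.2, r.1) :=
    ((Equiv.prodComm ℕ+ (ℕ+ × ℕ+)).summable_iff.mpr SF).congr fun _ => rfl
  have hinner : ∀ j : ℕ+, (∑' mn : ℕ+ × ℕ+, F (mn, j)) =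
      ((j : ℕ) : ℂ) ^ (k - 1) *
        ((qexp τ ^ (j : ℕ) * (1 - qexp τ ^ (j : ℕ))⁻¹) *
         (qexp σ ^ (j : ℕ) * (1 - qexp σ ^ (j : ℕ))⁻¹)) := by
    intro j
    have h1 : ∀ mn : ℕ+ × ℕ+, F (mn, j) = ((j : ℕ) : ℂ) ^ (k - 1) *
        ((qexp τ ^ (j : ℕ)) ^ (mn.1 : ℕ) * (qexp σ ^ (j : ℕ)) ^ (mn.2 : ℕ)) := by
      intro mn
      rw [hF]
      simp only [← pow_mul]
    rw [tsum_congr h1, tsum_mul_left, ← tsum_mul_tsum_of_summable_norm (hgeo _ hx j) (hgeo _ hy j),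
      EZ5.tsum_geom_pnat (EZ5.norm_pow_lt_one hx j), EZ5.tsum_geom_pnat (EZ5.norm_pow_lt_one hy j)]
  have hC : (∑' q : (ℕ+ × ℕ+) × ℕ+, F q) = ∑' j : ℕ+, ((j : ℕ) : ℂ) ^ (k - 1) *
      ((qexp τ ^ (j : ℕ) * (1 - qexp τ ^ (j : ℕ))⁻¹) *
       (qexp σ ^ (j : ℕ) * (1 - qexp σ ^ (j : ℕ))⁻¹)) := by
    rw [← Equiv.tsum_eq (Equiv.prodComm ℕ+ (ℕ+ × ℕ+)) F,
      show (fun c : ℕ+ × (ℕ+ × ℕ+) => F ((Equiv.prodComm ℕ+ (ℕ+ × ℕ+)) c)) =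
        (fun c => F (c.2, c.1)) from rfl, Summable.tsum_prod SF']
    exact tsum_congr hinner
  have SC : Summable fun j : ℕ+ => ((j : ℕ) : ℂ) ^ (k - 1) *
      ((qexp τ ^ (j : ℕ) * (1 - qexp τ ^ (j : ℕ))⁻¹) *
       (qexp σ ^ (j : ℕ) * (1 - qexp σ ^ (j : ℕ))⁻¹)) :=
    SF'.prod.congr hinner
  have SA : Summable fun j : ℕ+ => ((j : ℕ) : ℂ) ^ (k - 1) *
      (qexp τ ^ (j : ℕ) * (1 - qexp τ ^ (j : ℕ))⁻¹) :=
    (EZ5.summable2C (k - 1) hx).prod.congr fun j => EZ5.inner_geom (k - 1) hx j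
  have SB : Summable fun j : ℕ+ => ((j : ℕ) : ℂ) ^ (k - 1) *
      (qexp σ ^ (j : ℕ) * (1 - qexp σ ^ (j : ℕ))⁻¹) :=
    (EZ5.summable2C (k - 1) hy).prod.congr fun j => EZ5.inner_geom (k - 1) hy j
  -- coprime fiberwise grouping
  have SH : Summable fun mn : ℕ+ × ℕ+ => ∑' j : ℕ+, F (mn, j) := SF.prod
  have hHsum : HasSum (fun mn : ℕ+ × ℕ+ => ∑' j : ℕ+, F (mn, j)) (∑' q, F q) := by
    have h := (Summable.tsum_prod SF).symm
    exact h ▸ SH.hasSum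
  have hfib := (hHsum.tsum_fiberwise EZ5.gcdFn).tsum_eq
  have hfibval : ∀ p : EZ5.Cop,
      (∑' mn : EZ5.gcdFn ⁻¹' {p}, ∑' j : ℕ+, F ((mn : ℕ+ × ℕ+), j)) =
      ∑' r : ℕ+ × ℕ+, ((r.1 : ℕ) : ℂ) ^ (k - 1) *
        (qexp τ ^ (p : ℕ × ℕ).1 * qexp σ ^ (p : ℕ × ℕ).2) ^ ((r.1 : ℕ) * (r.2 : ℕ)) := by
    intro p
    rw [← Equiv.tsum_eq (EZ5.EfibC p).symm]
    have h1 : ∀ c : ℕ+, (∑' j : ℕ+, F ((((EZ5.EfibC p).symm c : EZ5.gcdFn ⁻¹' {p}) : ℕ+ × ℕ+), j)) =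
        ∑' j : ℕ+, ((j : ℕ) : ℂ) ^ (k - 1) *
          (qexp τ ^ (p : ℕ × ℕ).1 * qexp σ ^ (p : ℕ × ℕ).2) ^ ((j : ℕ) * (c : ℕ)) :=
      fun c => tsum_congr fun j => hptF p c j
    rw [tsum_congr h1]
    have Sw := EZ5.summable2C (k - 1) (hwp p)
    have Swswap : Summable fun r : ℕ+ × ℕ+ => ((r.2 : ℕ) : ℂ) ^ (k - 1) *
        (qexp τ ^ (p : ℕ × ℕ).1 * qexp σ ^ (p : ℕ × ℕ).2) ^ ((r.2 : ℕ) * (r.1 : ℕ)) :=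
      ((Equiv.prodComm ℕ+ ℕ+).summable_iff.mpr Sw).congr fun _ => rfl
    rw [← Summable.tsum_prod Swswap]
    exact Equiv.tsum_eq (Equiv.prodComm ℕ+ ℕ+) (fun r : ℕ+ × ℕ+ =>
      ((r.1 : ℕ) : ℂ) ^ (k - 1) *
        (qexp τ ^ (p : ℕ × ℕ).1 * qexp σ ^ (p : ℕ × ℕ).2) ^ ((r.1 : ℕ) * (r.2 : ℕ)))
  have hcop : (∑' p : EZ5.Cop, ∑' r : ℕ+ × ℕ+, ((r.1 : ℕ) : ℂ) ^ (k - 1) *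
      (qexp τ ^ (p : ℕ × ℕ).1 * qexp σ ^ (p : ℕ × ℕ).2) ^ ((r.1 : ℕ) * (r.2 : ℕ))) =
      ∑' q, F q := by
    rw [← hfib]
    exact tsum_congr fun p => (hfibval p).symm
  have hDkcop : (∑' p : EZ5.Cop, Dk k (qexp τ ^ (p : ℕ × ℕ).1 * qexp σ ^ (p : ℕ × ℕ).2)) =
      -((2 * (Real.pi : ℂ) * Complex.I) ^ k / (Nat.factorial (k - 1) : ℂ)) * ∑' q, F q := by
    rw [← hcop, ← tsum_mul_left]
    exact tsum_congr fun p => hDkeq _ (hwp p)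
  -- norm summability over coprime pairs
  have SDknorm : Summable fun p : EZ5.Cop =>
      ‖Dk k (qexp τ ^ (p : ℕ × ℕ).1 * qexp σ ^ (p : ℕ × ℕ).2)‖ := by
    have SHn : Summable fun mn : ℕ+ × ℕ+ => ∑' j : ℕ+, ‖F (mn, j)‖ := SFn.prod
    have hHnsum : HasSum (fun mn : ℕ+ × ℕ+ => ∑' j : ℕ+, ‖F (mn, j)‖) (∑' q, ‖F q‖) := by
      have h := (Summable.tsum_prod SFn).symm
      exact h ▸ SHn.hasSum
    have Sfibn : Summable fun p : EZ5.Cop =>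
        ∑' mn : EZ5.gcdFn ⁻¹' {p}, ∑' j : ℕ+, ‖F ((mn : ℕ+ × ℕ+), j)‖ :=
      (hHnsum.tsum_fiberwise EZ5.gcdFn).summable
    apply Summable.of_nonneg_of_le (fun p => norm_nonneg _) (fun p => ?_)
      (Sfibn.mul_left ‖(2 * (Real.pi : ℂ) * Complex.I) ^ k / (Nat.factorial (k - 1) : ℂ)‖)
    rw [hDkeq _ (hwp p), norm_mul, norm_neg]
    apply mul_le_mul_of_nonneg_left _ (norm_nonneg _)
    -- norm of the double sum is at most the fiber norm-sum
    have hnormsum : Summable fun r : ℕ+ × ℕ+ => ‖((r.1 : ℕ) : ℂ) ^ (k - 1) *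
        (qexp τ ^ (p : ℕ × ℕ).1 * qexp σ ^ (p : ℕ × ℕ).2) ^ ((r.1 : ℕ) * (r.2 : ℕ))‖ :=
      (EZ5.summable2C (k - 1) (hwp p)).norm
    refine le_trans (norm_tsum_le_tsum_norm hnormsum) (le_of_eq ?_)
    -- now identify the two (nonneg) sums via the same equivalences
    have h1 : ∀ c : ℕ+, (∑' j : ℕ+, ‖F ((((EZ5.EfibC p).symm c : EZ5.gcdFn ⁻¹' {p}) : ℕ+ × ℕ+), j)‖) =
        ∑' j : ℕ+, ‖((j : ℕ) : ℂ) ^ (k - 1) *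
          (qexp τ ^ (p : ℕ × ℕ).1 * qexp σ ^ (p : ℕ × ℕ).2) ^ ((j : ℕ) * (c : ℕ))‖ :=
      fun c => tsum_congr fun j => congrArg norm (hptF p c j)
    rw [← Equiv.tsum_eq (EZ5.EfibC p).symm, tsum_congr h1]
    have Swn : Summable fun r : ℕ+ × ℕ+ => ‖((r.2 : ℕ) : ℂ) ^ (k - 1) *
        (qexp τ ^ (p : ℕ × ℕ).1 * qexp σ ^ (p : ℕ × ℕ).2) ^ ((r.2 : ℕ) * (r.1 : ℕ))‖ :=
      (((Equiv.prodComm ℕ+ ℕ+).summable_iff.mpr (EZ5.summable2C (k - 1) (hwp p))).congr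
        fun _ => rfl).norm
    rw [← Summable.tsum_prod Swn]
    exact (Equiv.tsum_eq (Equiv.prodComm ℕ+ ℕ+) (fun r : ℕ+ × ℕ+ =>
      ‖((r.1 : ℕ) : ℂ) ^ (k - 1) *
        (qexp τ ^ (p : ℕ × ℕ).1 * qexp σ ^ (p : ℕ × ℕ).2) ^ ((r.1 : ℕ) * (r.2 : ℕ))‖)).symm
  refine ⟨SDknorm, ?_⟩
  -- the elliptic zeta identity
  rw [ellipticZeta]
  have hterm : ∀ j : ℕ+, (j : ℂ) ^ (k - 1) *
      (qexp τ ^ (j : ℕ) - (-1 : ℂ) ^ k * qexp σ ^ (j : ℕ)) /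
        ((1 - qexp τ ^ (j : ℕ)) * (1 - qexp σ ^ (j : ℕ))) =
      ((j : ℕ) : ℂ) ^ (k - 1) * (qexp τ ^ (j : ℕ) * (1 - qexp τ ^ (j : ℕ))⁻¹) +
      ((j : ℕ) : ℂ) ^ (k - 1) * (qexp σ ^ (j : ℕ) * (1 - qexp σ ^ (j : ℕ))⁻¹) +
      2 * (((j : ℕ) : ℂ) ^ (k - 1) *
        ((qexp τ ^ (j : ℕ) * (1 - qexp τ ^ (j : ℕ))⁻¹) *
         (qexp σ ^ (j : ℕ) * (1 - qexp σ ^ (j : ℕ))⁻¹))) := by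
    intro j
    have hu := EZ5.one_sub_ne (EZ5.norm_pow_lt_one hx j)
    have hv := EZ5.one_sub_ne (EZ5.norm_pow_lt_one hy j)
    rw [hk.neg_one_pow]
    field_simp
    ring
  rw [tsum_congr hterm, Summable.tsum_add (SA.add SB) (SC.mul_left 2), Summable.tsum_add SA SB, tsum_mul_left]
  rw [hDkeq _ hx, hDkeq _ hy, hDkcop, EZ5.tsum2_eq_lambert (k - 1) hx,
    EZ5.tsum2_eq_lambert (k - 1) hy, hC]
  ring
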